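/- Let a, b, c, d be pairwise distinct complex numbers with |a| = |b| = |c| = |d| = 1, ac ≠ bd and ad ≠ bc. Set w2 := (ac(b+d) − bd(a+c))/(ac − bd), w3 := (ad(b+c) − bc(a+d))/(ad − bc), p1 := ab(c − d)/(ac − bd) and p3 := cd(a − b)/(ac − bd). Suppose v1 ∈ ℂ satisfies v1 ≠ w2, |v1 − p1| = |w2 − p1| and |v1 − p3| = |w2 − p3| (i.e., v1 is the second intersection point of the circles C[a,b,w2] and C[c,d,w2]). Then |v1 − w2/2| = |w2|/2 (v1 lies on the circle with diameter [0, w2]), and the points 0, v1 and w3 are collinear (over ℝ, viewing ℂ as the real plane). -/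

import Mathlib

open Complex

private lemma abs_eq_of_mul_conj_eq {x y : ℂ}
    (h : x * (starRingEnd ℂ) x = y * (starRingEnd ℂ) y) :
    ‖x‖ = ‖y‖ := by
  have h1 : (Complex.normSq x : ℂ) = (Complex.normSq y : ℂ) := by
    rw [← Complex.mul_conj, ← Complex.mul_conj]; exact h
  have h2 : Complex.normSq x = Complex.normSq y := by exact_mod_cast h1
  rw [Complex.norm_def, Complex.norm_def, h2]

set_option maxHeartbeats 1600000 in
/-- The second intersection point `v1` of the circles `C[a,b,w2]` and `C[c,d,w2]`
lies on the circle with diameter `[0, w2]`, and `0`, `v1`, `w3` are collinear. -/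
theorem second_intersection_on_diameter_circle (a b c d v1 : ℂ)
    (ha : ‖a‖ = 1) (hb : ‖b‖ = 1)
    (hc : ‖c‖ = 1) (hd : ‖d‖ = 1)
    (hab : a ≠ b) (hac : a ≠ c) (had : a ≠ d)
    (hbc : b ≠ c) (hbd : b ≠ d) (hcd : c ≠ d)
    (h2 : a * c ≠ b * d) (h3 : a * d ≠ b * c) :
    let w2 := (a * c * (b + d) - b * d * (a + c)) / (a * c - b * d)
    let w3 := (a * d * (b + c) - b * c * (a + d)) / (a * d - b * c)
    let p1 := a * b * (c - d) / (a * c - b * d)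
    let p3 := c * d * (a - b) / (a * c - b * d)
    v1 ≠ w2 →
    ‖v1 - p1‖ = ‖w2 - p1‖ →
    ‖v1 - p3‖ = ‖w2 - p3‖ →
    ‖v1 - w2 / 2‖ = ‖w2‖ / 2 ∧
    Collinear ℝ ({0, v1, w3} : Set ℂ) := by
  intro w2 w3 p1 p3 hne h1 h3'
  have ha0 : a ≠ 0 := by intro h; rw [h] at ha; simp at ha
  have hb0 : b ≠ 0 := by intro h; rw [h] at hb; simp at hb
  have hc0 : c ≠ 0 := by intro h; rw [h] at hc; simp at hc
  have hd0 : d ≠ 0 := by intro h; rw [h] at hd; simp at hd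
  have hca : (starRingEnd ℂ) a = a⁻¹ := by
    apply eq_inv_of_mul_eq_one_right
    rw [Complex.mul_conj, Complex.normSq_eq_norm_sq, ha]; norm_num
  have hcb : (starRingEnd ℂ) b = b⁻¹ := by
    apply eq_inv_of_mul_eq_one_right
    rw [Complex.mul_conj, Complex.normSq_eq_norm_sq, hb]; norm_num
  have hcc : (starRingEnd ℂ) c = c⁻¹ := by
    apply eq_inv_of_mul_eq_one_right
    rw [Complex.mul_conj, Complex.normSq_eq_norm_sq, hc]; norm_num
  have hcd' : (starRingEnd ℂ) d = d⁻¹ := by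
    apply eq_inv_of_mul_eq_one_right
    rw [Complex.mul_conj, Complex.normSq_eq_norm_sq, hd]; norm_num
  have hS : a*c - b*d ≠ 0 := sub_ne_zero.mpr h2
  have hT : a*d - b*c ≠ 0 := sub_ne_zero.mpr h3
  have hSc : (starRingEnd ℂ) (a*c - b*d) ≠ 0 := by
    intro h; apply hS
    have := congrArg (starRingEnd ℂ) h
    simpa using this
  have hTc : (starRingEnd ℂ) (a*d - b*c) ≠ 0 := by
    intro h; apply hT
    have := congrArg (starRingEnd ℂ) h
    simpa using this
  -- b + c - a - d ≠ 0
  have hKC : b + c - a - d ≠ 0 := by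
    intro h
    have h' : (starRingEnd ℂ) (b + c - a - d) = 0 := by rw [h]; simp
    simp only [map_sub, map_add, hca, hcb, hcc, hcd'] at h'
    have h'' : a*c*d + a*b*d - b*c*d - a*b*c = 0 := by
      field_simp at h'
      linear_combination h'
    have key : (a + d) * (b*c - a*d) = 0 := by
      linear_combination -h'' + (a*d) * h
    rcases mul_eq_zero.mp key with h4 | h4
    · apply h2
      have hd' : d = -a := by linear_combination h4
      have hc2 : c = -b := by linear_combination h + h4
      rw [hd', hc2]; ring
    · exact h3 (by linear_combination -h4)
  have hK : a*b*(c-d) - c*d*(a-b) ≠ 0 := by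
    intro h
    have h' : (starRingEnd ℂ) (a*b*(c-d) - c*d*(a-b)) = 0 := by rw [h]; simp
    simp only [map_sub, map_mul, hca, hcb, hcc, hcd'] at h'
    field_simp at h'
    have habcd : a*b*c*d ≠ 0 := by
      simp [ha0, hb0, hc0, hd0]
    have h'' : a*b*c*d * (b + c - a - d) = 0 := by linear_combination (-(a*b*c*d)) * h'
    exact hKC ((mul_eq_zero.mp h'').resolve_left habcd)
  have hQ : ((a*b*(c-d) - c*d*(a-b))/(a*c - b*d)) ≠ 0 := div_ne_zero hK hS
  have hQC : ((b+c-a-d)/(a*c - b*d)) ≠ 0 := div_ne_zero hKC hS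
  have hw2 : w2 = ((a*c*(b+d) - b*d*(a+c))/(a*c - b*d)) := rfl
  have hw3 : w3 = ((a*d*(b+c) - b*c*(a+d))/(a*d - b*c)) := rfl
  have hp1 : p1 = (a*b*(c-d)/(a*c - b*d)) := rfl
  have hp3 : p3 = (c*d*(a-b)/(a*c - b*d)) := rfl
  have hcw2 : (starRingEnd ℂ) ((a*c*(b+d) - b*d*(a+c))/(a*c - b*d)) = ((a+c-b-d)/(a*c - b*d)) := by
    rw [map_div₀, div_eq_div_iff hSc hS]
    simp only [map_sub, map_add, map_mul, hca, hcb, hcc, hcd']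
    field_simp
    ring
  have hcw3 : (starRingEnd ℂ) ((a*d*(b+c) - b*c*(a+d))/(a*d - b*c)) = ((a+d-b-c)/(a*d - b*c)) := by
    rw [map_div₀, div_eq_div_iff hTc hT]
    simp only [map_sub, map_add, map_mul, hca, hcb, hcc, hcd']
    field_simp
    ring
  have hcp1 : (starRingEnd ℂ) (a*b*(c-d)/(a*c - b*d)) = ((c-d)/(a*c - b*d)) := by
    rw [map_div₀, div_eq_div_iff hSc hS]
    simp only [map_sub, map_add, map_mul, hca, hcb, hcc, hcd']
    field_simp
    ring
  have hcp3 : (starRingEnd ℂ) (c*d*(a-b)/(a*c - b*d)) = ((a-b)/(a*c - b*d)) := by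
    rw [map_div₀, div_eq_div_iff hSc hS]
    simp only [map_sub, map_add, map_mul, hca, hcb, hcc, hcd']
    field_simp
    ring
  have hne' : v1 - ((a*c*(b+d) - b*d*(a+c))/(a*c - b*d)) ≠ 0 := sub_ne_zero.mpr (by rw [← hw2]; exact hne)
  have H1 : (v1 - p1) * (starRingEnd ℂ) (v1 - p1)
      = (w2 - p1) * (starRingEnd ℂ) (w2 - p1) := by
    rw [Complex.mul_conj, Complex.mul_conj]
    norm_cast
    rw [← Complex.sq_norm, ← Complex.sq_norm, h1]
  have H3 : (v1 - p3) * (starRingEnd ℂ) (v1 - p3)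
      = (w2 - p3) * (starRingEnd ℂ) (w2 - p3) := by
    rw [Complex.mul_conj, Complex.mul_conj]
    norm_cast
    rw [← Complex.sq_norm, ← Complex.sq_norm, h3']
  rw [hw2, hp1, map_sub, map_sub, hcp1, hcw2] at H1
  rw [hw2, hp3, map_sub, map_sub, hcp3, hcw2] at H3
  -- key linear relation (radical axis)
  have eB : (v1 - ((a*c*(b+d) - b*d*(a+c))/(a*c - b*d))) * ((b+c-a-d)/(a*c - b*d)) + ((starRingEnd ℂ) v1 - ((a+c-b-d)/(a*c - b*d))) * ((a*b*(c-d) - c*d*(a-b))/(a*c - b*d)) = 0 := by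
    linear_combination H3 - H1
  -- circle equation recentred
  have eA : (v1 - ((a*c*(b+d) - b*d*(a+c))/(a*c - b*d))) * ((starRingEnd ℂ) v1 - ((a+c-b-d)/(a*c - b*d)))
      + (v1 - ((a*c*(b+d) - b*d*(a+c))/(a*c - b*d))) * ((a-b)/(a*c - b*d)) + ((starRingEnd ℂ) v1 - ((a+c-b-d)/(a*c - b*d))) * (c*d*(a-b)/(a*c - b*d)) = 0 := by
    linear_combination H1
  have h5 : (v1 - ((a*c*(b+d) - b*d*(a+c))/(a*c - b*d))) * ((v1 - ((a*c*(b+d) - b*d*(a+c))/(a*c - b*d))) * ((b+c-a-d)/(a*c - b*d)) - (((a*b*(c-d) - c*d*(a-b))/(a*c - b*d)) * ((a-b)/(a*c - b*d)) - ((b+c-a-d)/(a*c - b*d)) * (c*d*(a-b)/(a*c - b*d)))) = 0 := by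
    linear_combination (-((a*b*(c-d) - c*d*(a-b))/(a*c - b*d))) * eA + ((v1 - ((a*c*(b+d) - b*d*(a+c))/(a*c - b*d))) + (c*d*(a-b)/(a*c - b*d))) * eB
  have hu : (v1 - ((a*c*(b+d) - b*d*(a+c))/(a*c - b*d))) * ((b+c-a-d)/(a*c - b*d)) - (((a*b*(c-d) - c*d*(a-b))/(a*c - b*d)) * ((a-b)/(a*c - b*d)) - ((b+c-a-d)/(a*c - b*d)) * (c*d*(a-b)/(a*c - b*d))) = 0 :=
    (mul_eq_zero.mp h5).resolve_left hne'
  -- Goal 1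
  have claim1 : ((a*b*(c-d) - c*d*(a-b))/(a*c - b*d)) * (2*(v1 - ((a*c*(b+d) - b*d*(a+c))/(a*c - b*d)))*((starRingEnd ℂ) v1 - ((a+c-b-d)/(a*c - b*d)))
      + (v1 - ((a*c*(b+d) - b*d*(a+c))/(a*c - b*d)))*((a+c-b-d)/(a*c - b*d)) + ((starRingEnd ℂ) v1 - ((a+c-b-d)/(a*c - b*d)))*((a*c*(b+d) - b*d*(a+c))/(a*c - b*d))) = 0 := by
    linear_combination (2*(v1 - ((a*c*(b+d) - b*d*(a+c))/(a*c - b*d))) + ((a*c*(b+d) - b*d*(a+c))/(a*c - b*d))) * eB + (-2*(v1 - ((a*c*(b+d) - b*d*(a+c))/(a*c - b*d)))) * hu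
  have key1 : 2*(v1 - ((a*c*(b+d) - b*d*(a+c))/(a*c - b*d)))*((starRingEnd ℂ) v1 - ((a+c-b-d)/(a*c - b*d)))
      + (v1 - ((a*c*(b+d) - b*d*(a+c))/(a*c - b*d)))*((a+c-b-d)/(a*c - b*d)) + ((starRingEnd ℂ) v1 - ((a+c-b-d)/(a*c - b*d)))*((a*c*(b+d) - b*d*(a+c))/(a*c - b*d)) = 0 :=
    (mul_eq_zero.mp claim1).resolve_left hQ
  have G1 : ‖v1 - w2 / 2‖ = ‖w2‖ / 2 := by
    rw [hw2]
    have e : v1 - ((a*c*(b+d) - b*d*(a+c))/(a*c - b*d))/2 = (2*v1 - ((a*c*(b+d) - b*d*(a+c))/(a*c - b*d)))/2 := by ring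
    have habs2 : ‖2*v1 - ((a*c*(b+d) - b*d*(a+c))/(a*c - b*d))‖ = ‖(a*c*(b+d) - b*d*(a+c))/(a*c - b*d)‖ := by
      apply abs_eq_of_mul_conj_eq
      rw [map_sub, map_mul, hcw2, Complex.conj_ofNat]
      linear_combination 2 * key1
    rw [e, norm_div, habs2]
    simp
  refine ⟨G1, ?_⟩
  -- Goal 2: collinearity
  have I2 : ((a*b*(c-d) - c*d*(a-b))/(a*c - b*d))*((b+c-a-d)/(a*c - b*d))*(((a*c*(b+d) - b*d*(a+c))/(a*c - b*d))*((a+d-b-c)/(a*d - b*c)) - ((a+c-b-d)/(a*c - b*d))*((a*d*(b+c) - b*c*(a+d))/(a*d - b*c)))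
      + (((a*b*(c-d) - c*d*(a-b))/(a*c - b*d))*((a-b)/(a*c - b*d)) - ((b+c-a-d)/(a*c - b*d))*(c*d*(a-b)/(a*c - b*d)))*(((a*b*(c-d) - c*d*(a-b))/(a*c - b*d))*((a+d-b-c)/(a*d - b*c)) + ((b+c-a-d)/(a*c - b*d))*((a*d*(b+c) - b*c*(a+d))/(a*d - b*c))) = 0 := by
    ring
  have claim2 : ((a*b*(c-d) - c*d*(a-b))/(a*c - b*d))*((b+c-a-d)/(a*c - b*d))*(v1*((a+d-b-c)/(a*d - b*c)) - (starRingEnd ℂ) v1*((a*d*(b+c) - b*c*(a+d))/(a*d - b*c))) = 0 := by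
    linear_combination (-(((b+c-a-d)/(a*c - b*d))*((a*d*(b+c) - b*c*(a+d))/(a*d - b*c)))) * eB + (((a*b*(c-d) - c*d*(a-b))/(a*c - b*d))*((a+d-b-c)/(a*d - b*c)) + ((b+c-a-d)/(a*c - b*d))*((a*d*(b+c) - b*c*(a+d))/(a*d - b*c))) * hu + I2
  have G2 : v1*((a+d-b-c)/(a*d - b*c)) = (starRingEnd ℂ) v1*((a*d*(b+c) - b*c*(a+d))/(a*d - b*c)) := by
    have := (mul_eq_zero.mp claim2).resolve_left (mul_ne_zero hQ hQC)
    linear_combination this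
  rw [hw3]
  apply (collinear_iff_of_mem (Set.mem_insert (0:ℂ) _)).mpr
  rcases eq_or_ne (((a*d*(b+c) - b*c*(a+d))/(a*d - b*c)) : ℂ) 0 with h0 | h0
  · refine ⟨v1, ?_⟩
    rintro p (rfl | rfl | rfl)
    · exact ⟨0, by simp⟩
    · exact ⟨1, by simp⟩
    · exact ⟨0, by simp [h0]⟩
  · have h0c : (((a+d-b-c)/(a*d - b*c)) : ℂ) ≠ 0 := by
      rw [← hcw3]
      intro h; apply h0
      have := congrArg (starRingEnd ℂ) h
      simpa using this
    refine ⟨((a*d*(b+c) - b*c*(a+d))/(a*d - b*c)), ?_⟩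
    rintro p (rfl | hpv | rfl)
    · exact ⟨0, by simp⟩
    · rw [hpv]
      refine ⟨(v1 / ((a*d*(b+c) - b*c*(a+d))/(a*d - b*c))).re, ?_⟩
      have hre : (starRingEnd ℂ) (v1 / ((a*d*(b+c) - b*c*(a+d))/(a*d - b*c))) = v1 / ((a*d*(b+c) - b*c*(a+d))/(a*d - b*c)) := by
        rw [map_div₀, hcw3]
        rw [div_eq_div_iff h0c h0]
        linear_combination -G2
      have hre' : ((v1 / ((a*d*(b+c) - b*c*(a+d))/(a*d - b*c))).re : ℂ) = v1 / ((a*d*(b+c) - b*c*(a+d))/(a*d - b*c)) := Complex.conj_eq_iff_re.mp hre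
      rw [Complex.real_smul, hre', vadd_eq_add, add_zero, div_mul_cancel₀ _ h0]
    · exact ⟨1, by simp⟩
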